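/- A G-graded commutative ring R is a Gelfand graded ring if and only if for every graded maximal ideal M of R, the set {P ∈ GSpec(R) : P ⊆ M} is a Zariski closed subset of GSpec(R). -/

import Mathlib

section GradedGelfand

variable {G : Type*} [AddGroup G] [DecidableEq G] {R : Type*} [CommRing R]
variable (𝒜 : G → AddSubgroup R) [GradedRing 𝒜]

/-- A homogeneous (graded) prime ideal: a proper graded ideal that is prime
with respect to homogeneous elements. -/
def IsGradedPrime (P : Ideal R) : Prop :=
  P.IsHomogeneous 𝒜 ∧ P ≠ ⊤ ∧
    ∀ a b : R, SetLike.IsHomogeneousElem 𝒜 a → SetLike.IsHomogeneousElem 𝒜 b →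
      a * b ∈ P → a ∈ P ∨ b ∈ P

/-- A graded maximal ideal: a proper graded ideal maximal among proper graded ideals. -/
def IsGradedMaximal (M : Ideal R) : Prop :=
  M.IsHomogeneous 𝒜 ∧ M ≠ ⊤ ∧
    ∀ J : Ideal R, J.IsHomogeneous 𝒜 → M ≤ J → J ≠ ⊤ → J = M

/-- The homogeneous prime spectrum of a graded ring. -/
def GSpec := { P : Ideal R // IsGradedPrime 𝒜 P }

/-- The Zariski topology on the homogeneous prime spectrum, generated by the basic
open sets `D_G(r)` for homogeneous `r`; the closed sets are exactly the `V_G(I)`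
for graded ideals `I`. -/
instance : TopologicalSpace (GSpec 𝒜) :=
  TopologicalSpace.generateFrom
    { U | ∃ r : R, SetLike.IsHomogeneousElem 𝒜 r ∧ U = { P : GSpec 𝒜 | r ∉ P.1 } }

/-- The set of graded maximal ideals inside the homogeneous prime spectrum. -/
def GMax : Set (GSpec 𝒜) := { P | IsGradedMaximal 𝒜 P.1 }

/-- A Gelfand graded ring: every homogeneous prime ideal is contained in a unique
graded maximal ideal. -/
def IsGelfandGraded : Prop :=
  ∀ P : Ideal R, IsGradedPrime 𝒜 P →
    ∃! M : Ideal R, IsGradedMaximal 𝒜 M ∧ P ≤ M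

/-- A pm⁺ graded ring: for every homogeneous prime `P`, the homogeneous primes
containing `P` form a chain. -/
def IsPMPlusGraded : Prop :=
  ∀ P Q Q' : Ideal R, IsGradedPrime 𝒜 P → IsGradedPrime 𝒜 Q → IsGradedPrime 𝒜 Q' →
    P ≤ Q → P ≤ Q' → Q ≤ Q' ∨ Q' ≤ Q

end GradedGelfand


section Helpers

variable {G : Type*} [AddGroup G] [DecidableEq G] {R : Type*} [CommRing R]
variable (𝒜 : G → AddSubgroup R) [GradedRing 𝒜]

-- graded ideal: membership from homogeneous elements
lemma le_of_homog_le {I J : Ideal R} (hI : I.IsHomogeneous 𝒜)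
    (h : ∀ r : R, SetLike.IsHomogeneousElem 𝒜 r → r ∈ I → r ∈ J) : I ≤ J := by
  intro x hx
  classical
  have hx' : x = ∑ i ∈ (DirectSum.decompose 𝒜 x).support, (DirectSum.decompose 𝒜 x i : R) :=
    (DirectSum.sum_support_decompose 𝒜 x).symm
  rw [hx']
  refine Ideal.sum_mem _ fun i _ => ?_
  exact h _ ⟨i, (DirectSum.decompose 𝒜 x i).2⟩ (hI i hx)

lemma gradedMaximal_isPrime {M : Ideal R} (hM : IsGradedMaximal 𝒜 M) : IsGradedPrime 𝒜 M := by
  obtain ⟨hhom, hne, hmax⟩ := hM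
  refine ⟨hhom, hne, fun a b ha hb hab => ?_⟩
  by_contra hcon
  push_neg at hcon
  obtain ⟨haM, hbM⟩ := hcon
  have hJ : (M ⊔ Ideal.span {a}).IsHomogeneous 𝒜 :=
    hhom.sup (Ideal.homogeneous_span 𝒜 {a} (by simpa using ha))
  have htop : M ⊔ Ideal.span {a} = ⊤ := by
    by_contra hne'
    have heq := hmax _ hJ le_sup_left hne'
    exact haM (heq ▸ Submodule.mem_sup_right (Ideal.subset_span rfl))
  have h1 : (1 : R) ∈ M ⊔ Ideal.span {a} := htop ▸ Submodule.mem_top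
  rw [Submodule.mem_sup] at h1
  obtain ⟨m, hm, x, hx, hmx⟩ := h1
  rw [Ideal.mem_span_singleton] at hx
  obtain ⟨r, rfl⟩ := hx
  have hb' : b = m * b + r * (a * b) := by linear_combination (-b) * hmx
  exact hbM (hb' ▸ Ideal.add_mem _ (Ideal.mul_mem_right _ _ hm) (Ideal.mul_mem_left _ _ hab))

lemma exists_gradedMaximal {P : Ideal R} (hP : P.IsHomogeneous 𝒜) (hPne : P ≠ ⊤) :
    ∃ M : Ideal R, IsGradedMaximal 𝒜 M ∧ P ≤ M := by
  have hchaincond : ∀ c ⊆ {J : Ideal R | J.IsHomogeneous 𝒜 ∧ J ≠ ⊤},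
      IsChain (· ≤ ·) c → ∀ y ∈ c, ∃ ub ∈ {J : Ideal R | J.IsHomogeneous 𝒜 ∧ J ≠ ⊤},
        ∀ z ∈ c, z ≤ ub := by
    intro c hcs hchain y hy
    refine ⟨sSup c, ⟨?_, ?_⟩, fun z hz => le_sSup hz⟩
    · exact Ideal.IsHomogeneous.sSup fun I hI => (hcs hI).1
    · intro htop
      have h1 : (1 : R) ∈ sSup c := htop ▸ Submodule.mem_top
      rw [Submodule.mem_sSup_of_directed ⟨y, hy⟩ hchain.directedOn] at h1
      obtain ⟨I, hIc, h1I⟩ := h1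
      exact (hcs hIc).2 ((Ideal.eq_top_iff_one I).2 h1I)
  obtain ⟨M, hPM, hMmax⟩ :=
    zorn_le_nonempty₀ {J : Ideal R | J.IsHomogeneous 𝒜 ∧ J ≠ ⊤} hchaincond P ⟨hP, hPne⟩
  refine ⟨M, ⟨hMmax.prop.1, hMmax.prop.2, fun J hJ hMJ hJne => ?_⟩, hPM⟩
  exact le_antisymm (hMmax.2 ⟨hJ, hJne⟩ hMJ) hMJ

lemma gelfand_sep (hG : IsGelfandGraded 𝒜) {M N : Ideal R}
    (hM : IsGradedMaximal 𝒜 M) (hN : IsGradedMaximal 𝒜 N) (hMN : M ≠ N) :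
    ∃ a b : R, SetLike.IsHomogeneousElem 𝒜 a ∧ SetLike.IsHomogeneousElem 𝒜 b ∧
      a ∉ M ∧ b ∉ N ∧ a * b = 0 := by
  by_contra hcon
  push_neg at hcon
  set S : Set R := {x | ∃ a b : R, SetLike.IsHomogeneousElem 𝒜 a ∧ SetLike.IsHomogeneousElem 𝒜 b ∧
      a ∉ M ∧ b ∉ N ∧ x = a * b} with hS
  have hMp := gradedMaximal_isPrime 𝒜 hM
  have hNp := gradedMaximal_isPrime 𝒜 hN
  have h0S : (0 : R) ∉ S := by
    rintro ⟨a, b, ha, hb, haM, hbN, hab⟩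
    exact hcon a b ha hb haM hbN hab.symm
  have h1M : (1 : R) ∉ M := fun h => hM.2.1 ((Ideal.eq_top_iff_one M).2 h)
  have h1N : (1 : R) ∉ N := fun h => hN.2.1 ((Ideal.eq_top_iff_one N).2 h)
  have hmulS : ∀ x ∈ S, ∀ y ∈ S, x * y ∈ S := by
    rintro _ ⟨a1, b1, ha1, hb1, ha1M, hb1N, rfl⟩ _ ⟨a2, b2, ha2, hb2, ha2M, hb2N, rfl⟩
    refine ⟨a1 * a2, b1 * b2, SetLike.IsHomogeneousElem.mul ha1 ha2,
      SetLike.IsHomogeneousElem.mul hb1 hb2, ?_, ?_, by ring⟩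
    · intro h
      rcases hMp.2.2 a1 a2 ha1 ha2 h with h' | h' <;> [exact ha1M h'; exact ha2M h']
    · intro h
      rcases hNp.2.2 b1 b2 hb1 hb2 h with h' | h' <;> [exact hb1N h'; exact hb2N h']
  -- Zorn: graded ideal maximal among graded ideals disjoint from S
  have hchaincond : ∀ c ⊆ {J : Ideal R | J.IsHomogeneous 𝒜 ∧ ∀ s ∈ S, s ∉ J},
      IsChain (· ≤ ·) c → ∀ y ∈ c, ∃ ub ∈ {J : Ideal R | J.IsHomogeneous 𝒜 ∧ ∀ s ∈ S, s ∉ J},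
        ∀ z ∈ c, z ≤ ub := by
    intro c hcs hchain y hy
    refine ⟨sSup c, ⟨Ideal.IsHomogeneous.sSup fun I hI => (hcs hI).1, ?_⟩,
      fun z hz => le_sSup hz⟩
    intro s hsS hmem
    rw [Submodule.mem_sSup_of_directed ⟨y, hy⟩ hchain.directedOn] at hmem
    obtain ⟨I, hIc, hsI⟩ := hmem
    exact (hcs hIc).2 s hsS hsI
  obtain ⟨P, -, hPmax⟩ :=
    zorn_le_nonempty₀ {J : Ideal R | J.IsHomogeneous 𝒜 ∧ ∀ s ∈ S, s ∉ J} hchaincond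
      ⊥ ⟨Ideal.IsHomogeneous.bot 𝒜, fun s hsS h => h0S ((Submodule.mem_bot R).1 h ▸ hsS)⟩
  have hPhom : P.IsHomogeneous 𝒜 := hPmax.prop.1
  have hPdisj : ∀ s ∈ S, s ∉ P := hPmax.prop.2
  have h1S : (1 : R) ∈ S := ⟨1, 1, SetLike.isHomogeneousElem_one 𝒜, SetLike.isHomogeneousElem_one 𝒜,
    h1M, h1N, (one_mul 1).symm⟩
  have hPne : P ≠ ⊤ := fun h => hPdisj 1 h1S (h ▸ Submodule.mem_top)
  -- P is graded prime
  have hmeet : ∀ a : R, SetLike.IsHomogeneousElem 𝒜 a → a ∉ P →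
      ∃ s ∈ S, ∃ m ∈ P, ∃ r : R, s = m + r * a := by
    intro a ha haP
    have hJhom : (P ⊔ Ideal.span {a}).IsHomogeneous 𝒜 :=
      hPhom.sup (Ideal.homogeneous_span 𝒜 {a} (by simpa using ha))
    have : ¬ (∀ s ∈ S, s ∉ P ⊔ Ideal.span {a}) := by
      intro hdisj
      have := hPmax.2 ⟨hJhom, hdisj⟩ le_sup_left
      exact haP (this (Submodule.mem_sup_right (Ideal.subset_span rfl)))
    push_neg at this
    obtain ⟨s, hsS, hs⟩ := this
    rw [Submodule.mem_sup] at hs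
    obtain ⟨m, hm, x, hx, rfl⟩ := hs
    rw [Ideal.mem_span_singleton] at hx
    obtain ⟨r, rfl⟩ := hx
    exact ⟨m + a * r, hsS, m, hm, r, by ring⟩
  have hPprime : IsGradedPrime 𝒜 P := by
    refine ⟨hPhom, hPne, fun a b ha hb hab => ?_⟩
    by_contra hcon2
    push_neg at hcon2
    obtain ⟨s, hsS, m1, hm1, r1, hs⟩ := hmeet a ha hcon2.1
    obtain ⟨t, htS, m2, hm2, r2, ht⟩ := hmeet b hb hcon2.2
    have hst : s * t ∈ P := by
      rw [hs, ht]
      have : (m1 + r1 * a) * (m2 + r2 * b)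
          = m1 * (m2 + r2 * b) + (r1 * a) * m2 + (r1 * r2) * (a * b) := by ring
      rw [this]
      exact Ideal.add_mem _ (Ideal.add_mem _ (Ideal.mul_mem_right _ _ hm1)
        (Ideal.mul_mem_left _ _ hm2)) (Ideal.mul_mem_left _ _ hab)
    exact hPdisj _ (hmulS s hsS t htS) hst
  -- P ≤ M and P ≤ N
  have hPM : P ≤ M := by
    refine le_of_homog_le 𝒜 hPhom fun r hr hrP => ?_
    by_contra hrM
    exact hPdisj r ⟨r, 1, hr, SetLike.isHomogeneousElem_one 𝒜, hrM, h1N, (mul_one r).symm⟩ hrP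
  have hPN : P ≤ N := by
    refine le_of_homog_le 𝒜 hPhom fun r hr hrP => ?_
    by_contra hrN
    exact hPdisj r ⟨1, r, SetLike.isHomogeneousElem_one 𝒜, hr, h1M, hrN, (one_mul r).symm⟩ hrP
  obtain ⟨K, -, hKuniq⟩ := hG P hPprime
  exact hMN ((hKuniq M ⟨hM, hPM⟩).trans (hKuniq N ⟨hN, hPN⟩).symm)


end Helpers

section Statements

variable {G : Type*} [AddGroup G] [DecidableEq G] {R : Type*} [CommRing R]
variable (𝒜 : G → AddSubgroup R) [GradedRing 𝒜]

theorem stmt_4 : IsGelfandGraded 𝒜 ↔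
    ∀ M : Ideal R, IsGradedMaximal 𝒜 M → IsClosed { P : GSpec 𝒜 | P.1 ≤ M } := by
  constructor
  · intro hG M hM
    rw [← isOpen_compl_iff]
    have hcompl : { P : GSpec 𝒜 | P.1 ≤ M }ᶜ =
        ⋃ r : {r : R // SetLike.IsHomogeneousElem 𝒜 r ∧
          ∀ P : GSpec 𝒜, P.1 ≤ M → (r : R) ∈ P.1}, { P : GSpec 𝒜 | (r : R) ∉ P.1 } := by
      ext Q
      simp only [Set.mem_compl_iff, Set.mem_setOf_eq, Set.mem_iUnion]
      constructor
      · intro hQM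
        obtain ⟨N, ⟨hN, hQN⟩, -⟩ := hG Q.1 Q.2
        have hNM : N ≠ M := fun h => hQM (h ▸ hQN)
        obtain ⟨a, b, ha, hb, haM, hbN, hab⟩ := gelfand_sep 𝒜 hG hM hN hNM.symm
        refine ⟨⟨b, hb, fun P hPM => ?_⟩, fun hbQ => hbN (hQN hbQ)⟩
        rcases P.2.2.2 a b ha hb (hab ▸ P.1.zero_mem) with h | h
        · exact absurd (hPM h) haM
        · exact h
      · rintro ⟨⟨r, hr, hrI⟩, hrQ⟩ hQM
        exact hrQ (hrI Q hQM)
    rw [hcompl]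
    exact isOpen_iUnion fun r =>
      TopologicalSpace.isOpen_generateFrom_of_mem ⟨r, r.2.1, rfl⟩
  · intro h P hP
    obtain ⟨M, hM, hPM⟩ := exists_gradedMaximal 𝒜 hP.1 hP.2.1
    refine ⟨M, ⟨hM, hPM⟩, ?_⟩
    rintro N ⟨hN, hPN⟩
    by_contra hNM
    have hNp : IsGradedPrime 𝒜 N := gradedMaximal_isPrime 𝒜 hN
    set x : GSpec 𝒜 := ⟨N, hNp⟩ with hx
    have hxmem : x ∈ { P : GSpec 𝒜 | P.1 ≤ M }ᶜ := by
      intro hmem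
      exact hNM (hN.2.2 M hM.1 hmem hM.2.1).symm
    have hopen : IsOpen { P : GSpec 𝒜 | P.1 ≤ M }ᶜ := (h M hM).isOpen_compl
    obtain ⟨v, ⟨t, ⟨htfin, htsub⟩, rfl⟩, hxv, hvsub⟩ :=
      (TopologicalSpace.isTopologicalBasis_of_subbasis rfl).exists_subset_of_mem_open hxmem hopen
    have hpv : (⟨P, hP⟩ : GSpec 𝒜) ∈ ⋂₀ t := by
      intro u hu
      obtain ⟨r, hr, rfl⟩ := htsub hu
      have hrN : r ∉ N := hxv _ hu
      exact fun hrP => hrN (hPN hrP)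
    exact (hvsub hpv) hPM

end Statements
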